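/- Let p be a point lying on both circles S_{x_1,r_1} and S_{x_2,r_2} with distinct centers x_1 ≠ x_2. The tangent lines of the two circles at p coincide (equivalently, the sum of the tangent spaces at p is not all of ℝ²) if and only if p lies on the line through x_1 and x_2. -/

import Mathlib

theorem tangent_lines_coincide_iff_on_line_of_centers
    (x₁ x₂ p : EuclideanSpace ℝ (Fin 2)) (r₁ r₂ : ℝ) (hr₁ : 0 < r₁) (hr₂ : 0 < r₂)
    (hp₁ : ‖p - x₁‖ = r₁) (hp₂ : ‖p - x₂‖ = r₂) (hx : x₁ ≠ x₂) :
    {v : EuclideanSpace ℝ (Fin 2) | (inner ℝ v (p - x₁) : ℝ) = 0}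
        = {v : EuclideanSpace ℝ (Fin 2) | (inner ℝ v (p - x₂) : ℝ) = 0}
      ↔ ∃ t : ℝ, p = x₁ + t • (x₂ - x₁) := by
  have ha : p - x₁ ≠ 0 := by
    intro h; rw [h, norm_zero] at hp₁; exact absurd hp₁.symm (ne_of_gt hr₁)
  have hb : p - x₂ ≠ 0 := by
    intro h; rw [h, norm_zero] at hp₂; exact absurd hp₂.symm (ne_of_gt hr₂)
  constructor
  · intro hset
    have key : ∀ v : EuclideanSpace ℝ (Fin 2),
        (inner ℝ v (p - x₁) : ℝ) = 0 ↔ (inner ℝ v (p - x₂) : ℝ) = 0 := fun v =>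
      Set.ext_iff.mp hset v
    have hsub : (ℝ ∙ (p - x₁))ᗮ = (ℝ ∙ (p - x₂))ᗮ := by
      ext v
      rw [Submodule.mem_orthogonal_singleton_iff_inner_right,
        Submodule.mem_orthogonal_singleton_iff_inner_right,
        real_inner_comm v (p - x₁), real_inner_comm v (p - x₂)]
      exact key v
    have hspan : (ℝ ∙ (p - x₁)) = (ℝ ∙ (p - x₂)) := by
      have := congrArg Submodule.orthogonal hsub
      rwa [Submodule.orthogonal_orthogonal, Submodule.orthogonal_orthogonal] at this
    have hmem : p - x₂ ∈ (ℝ ∙ (p - x₁)) := by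
      rw [hspan]; exact Submodule.mem_span_singleton_self _
    obtain ⟨c, hc⟩ := Submodule.mem_span_singleton.mp hmem
    have hdiff : x₂ - x₁ = (1 - c) • (p - x₁) := by
      have : x₂ - x₁ = (p - x₁) - (p - x₂) := by abel
      rw [this, ← hc, sub_smul, one_smul]
    have h1c : (1 - c) ≠ 0 := by
      intro h
      rw [h, zero_smul] at hdiff
      exact hx (sub_eq_zero.mp hdiff).symm
    refine ⟨(1 - c)⁻¹, ?_⟩
    rw [hdiff, smul_smul, inv_mul_cancel₀ h1c, one_smul]
    abel
  · rintro ⟨t, rfl⟩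
    have ha' : (x₁ + t • (x₂ - x₁)) - x₁ = t • (x₂ - x₁) := by abel
    have hb' : (x₁ + t • (x₂ - x₁)) - x₂ = (t - 1) • (x₂ - x₁) := by
      rw [sub_smul, one_smul]; abel
    have ht : t ≠ 0 := by
      intro h; apply ha; rw [h, zero_smul, add_zero, sub_self]
    have ht1 : t - 1 ≠ 0 := by
      intro h; apply hb; rw [hb', h, zero_smul]
    ext v
    simp only [Set.mem_setOf_eq, ha', hb', real_inner_smul_right]
    constructor
    · intro h
      rcases mul_eq_zero.mp h with h' | h'
      · exact absurd h' ht
      · rw [h', mul_zero]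
    · intro h
      rcases mul_eq_zero.mp h with h' | h'
      · exact absurd h' ht1
      · rw [h', mul_zero]
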